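/- (Plackett's identity.) For all x, y ∈ ℝ and all ρ ∈ (−1,1), the function ρ ↦ Φ₂(x,y;ρ) is differentiable in ρ and its derivative equals the bivariate normal density: d/dρ Φ₂(x,y;ρ) = φ₂(x,y;ρ). -/

import Mathlib

open MeasureTheory Real Set Filter

/-- Standard normal density φ. -/
noncomputable def stdPdf (x : ℝ) : ℝ :=
  (1 / Real.sqrt (2 * Real.pi)) * Real.exp (-x ^ 2 / 2)

/-- Standard normal distribution function Φ. -/
noncomputable def stdCdf (h : ℝ) : ℝ := ∫ x in Set.Iio h, stdPdf x

/-- Inverse Φ⁻¹ of the standard normal distribution function (on (0,1)). -/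
noncomputable def stdQuantile : ℝ → ℝ := Function.invFun stdCdf

/-- Bivariate standard normal density φ₂ with correlation ρ. -/
noncomputable def binPdf (x y ρ : ℝ) : ℝ :=
  (1 / (2 * Real.pi * Real.sqrt (1 - ρ ^ 2))) *
    Real.exp (-(x ^ 2 - 2 * ρ * x * y + y ^ 2) / (2 * (1 - ρ ^ 2)))

/-- Bivariate standard normal distribution function Φ₂. -/
noncomputable def binCdf (h k ρ : ℝ) : ℝ :=
  ∫ x in Set.Iio h, ∫ y in Set.Iio k, binPdf x y ρ

/-- The bivariate normal copula C(u,v;ρ) = Φ₂(Φ⁻¹(u),Φ⁻¹(v);ρ). -/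
noncomputable def normCopula (u v ρ : ℝ) : ℝ :=
  binCdf (stdQuantile u) (stdQuantile v) ρ

/-- g(u;ρ) = Φ(√((1−ρ)/(1+ρ))·Φ⁻¹(u)). -/
noncomputable def gFun (u ρ : ℝ) : ℝ :=
  stdCdf (Real.sqrt ((1 - ρ) / (1 + ρ)) * stdQuantile u)

lemma continuous_stdPdf : Continuous stdPdf := by
  unfold stdPdf
  fun_prop

lemma stdPdf_nonneg (x : ℝ) : 0 ≤ stdPdf x := by
  unfold stdPdf
  positivity

lemma stdPdf_le_one (x : ℝ) : stdPdf x ≤ 1 := by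
  unfold stdPdf
  have h1 : Real.sqrt (2 * Real.pi) ≥ 1 := by
    rw [show (1:ℝ) = Real.sqrt 1 by simp]
    exact Real.sqrt_le_sqrt (by nlinarith [Real.pi_gt_three])
  have h2 : Real.exp (-x ^ 2 / 2) ≤ 1 := by
    rw [Real.exp_le_one_iff]
    nlinarith [sq_nonneg x]
  have h3 : (1:ℝ) / Real.sqrt (2 * Real.pi) ≤ 1 := by
    rw [div_le_one (by positivity)]
    exact h1
  calc 1 / Real.sqrt (2 * Real.pi) * Real.exp (-x ^ 2 / 2) ≤ 1 * 1 := by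
        apply mul_le_mul h3 h2 (le_of_lt (Real.exp_pos _)) zero_le_one
    _ = 1 := by ring

lemma integrable_stdPdf : Integrable stdPdf := by
  have h : Integrable (fun x : ℝ => (1 / Real.sqrt (2 * Real.pi)) * Real.exp (-(1/2 : ℝ) * x ^ 2)) :=
    Integrable.const_mul (integrable_exp_neg_mul_sq (by norm_num)) _
  have he : stdPdf = fun x : ℝ => (1 / Real.sqrt (2 * Real.pi)) * Real.exp (-(1/2:ℝ) * x ^ 2) := by
    funext x; unfold stdPdf; ring_nf
  rw [he]; exact h

lemma hasDerivAt_stdCdf (h : ℝ) : HasDerivAt stdCdf (stdPdf h) h := by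
  have hint : Integrable stdPdf := integrable_stdPdf
  have key : ∀ u : ℝ, stdCdf u = stdCdf 0 + ∫ t in (0:ℝ)..u, stdPdf t := by
    intro u
    have := intervalIntegral.integral_Iic_sub_Iic (hint.integrableOn (s := Iic 0))
      (hint.integrableOn (s := Iic u)) (μ := volume)
    unfold stdCdf
    rw [← integral_Iic_eq_integral_Iio, ← integral_Iic_eq_integral_Iio]
    linarith [this]
  have hd : HasDerivAt (fun u => stdCdf 0 + ∫ t in (0:ℝ)..u, stdPdf t) (stdPdf h) h := by
    apply HasDerivAt.const_add
    exact intervalIntegral.integral_hasDerivAt_right (hint.intervalIntegrable)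
      (continuous_stdPdf.stronglyMeasurable.stronglyMeasurableAtFilter)
      continuous_stdPdf.continuousAt
  exact hd.congr_of_eventuallyEq (Eventually.of_forall key)

lemma continuous_stdCdf : Continuous stdCdf :=
  continuous_iff_continuousAt.2 fun h => (hasDerivAt_stdCdf h).continuousAt

lemma stdCdf_nonneg (h : ℝ) : 0 ≤ stdCdf h :=
  setIntegral_nonneg measurableSet_Iio fun x _ => stdPdf_nonneg x

lemma stdCdf_le (h : ℝ) : stdCdf h ≤ ∫ x, stdPdf x :=
  setIntegral_le_integral integrable_stdPdf (Eventually.of_forall stdPdf_nonneg)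

lemma binPdf_eq (x t r : ℝ) (hr : r ∈ Set.Ioo (-1 : ℝ) 1) :
    binPdf x t r =
      stdPdf x * ((Real.sqrt (1 - r ^ 2))⁻¹ * stdPdf ((t - r * x) / Real.sqrt (1 - r ^ 2))) := by
  have h1 : (0:ℝ) < 1 - r ^ 2 := by nlinarith [hr.1, hr.2]
  have hσ : (0:ℝ) < Real.sqrt (1 - r ^ 2) := Real.sqrt_pos.2 h1
  have hσ2 : Real.sqrt (1 - r ^ 2) ^ 2 = 1 - r ^ 2 := Real.sq_sqrt h1.le
  have hπ : (0:ℝ) < Real.pi := Real.pi_pos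
  have h2π : Real.sqrt (2 * Real.pi) ^ 2 = 2 * Real.pi := Real.sq_sqrt (by positivity)
  have h2πpos : (0:ℝ) < Real.sqrt (2 * Real.pi) := Real.sqrt_pos.2 (by positivity)
  unfold binPdf stdPdf
  rw [show (1:ℝ) / Real.sqrt (2 * Real.pi) * Real.exp (-x ^ 2 / 2) *
      ((Real.sqrt (1 - r ^ 2))⁻¹ *
        (1 / Real.sqrt (2 * Real.pi) * Real.exp (-((t - r * x) / Real.sqrt (1 - r ^ 2)) ^ 2 / 2)))
      = (1 / (Real.sqrt (2 * Real.pi) * Real.sqrt (2 * Real.pi) * Real.sqrt (1 - r ^ 2))) *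
        (Real.exp (-x ^ 2 / 2) * Real.exp (-((t - r * x) / Real.sqrt (1 - r ^ 2)) ^ 2 / 2)) by ring]
  rw [← Real.exp_add]
  congr 1
  · congr 1
    nlinarith [h2π]
  · rw [div_pow, hσ2]
    field_simp
    ring

lemma integral_stdPdf_comp (k c σ : ℝ) (hσ : 0 < σ) :
    ∫ t in Set.Iio k, σ⁻¹ * stdPdf ((t - c) / σ) = stdCdf ((k - c) / σ) := by
  have hd : ∀ t ∈ Set.Iio k, HasDerivWithinAt (fun t => (t - c) / σ) σ⁻¹ (Set.Iio k) t := by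
    intro t _
    simpa [one_div] using (((hasDerivAt_id t).sub_const c).div_const σ).hasDerivWithinAt
  have hinj : Set.InjOn (fun t => (t - c) / σ) (Set.Iio k) := by
    intro a _ b _ hab
    simp only at hab
    have h2 : (a - c) / σ * σ = (b - c) / σ * σ := by rw [hab]
    rw [div_mul_cancel₀ _ hσ.ne', div_mul_cancel₀ _ hσ.ne'] at h2
    linarith
  have himg : (fun t => (t - c) / σ) '' Set.Iio k = Set.Iio ((k - c) / σ) := by
    ext u
    simp only [Set.mem_image, Set.mem_Iio]
    constructor
    · rintro ⟨t, ht, rfl⟩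
      exact div_lt_div_of_pos_right (by linarith) hσ
    · intro hu
      refine ⟨u * σ + c, ?_, by field_simp; ring⟩
      have := (lt_div_iff₀ hσ).1 hu
      linarith
  have key := integral_image_eq_integral_abs_deriv_smul measurableSet_Iio hd hinj stdPdf
  rw [himg] at key
  unfold stdCdf
  rw [key]
  simp [abs_of_pos (inv_pos.2 hσ), smul_eq_mul]

lemma inner_integral (x k r : ℝ) (hr : r ∈ Set.Ioo (-1 : ℝ) 1) :
    ∫ t in Set.Iio k, binPdf x t r
      = stdPdf x * stdCdf ((k - r * x) / Real.sqrt (1 - r ^ 2)) := by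
  have h1 : (0:ℝ) < 1 - r ^ 2 := by nlinarith [hr.1, hr.2]
  have hσ : (0:ℝ) < Real.sqrt (1 - r ^ 2) := Real.sqrt_pos.2 h1
  calc ∫ t in Set.Iio k, binPdf x t r
      = ∫ t in Set.Iio k, stdPdf x *
          ((Real.sqrt (1 - r ^ 2))⁻¹ * stdPdf ((t - r * x) / Real.sqrt (1 - r ^ 2))) :=
        setIntegral_congr_fun measurableSet_Iio fun t _ => binPdf_eq x t r hr
    _ = stdPdf x * ∫ t in Set.Iio k,
          (Real.sqrt (1 - r ^ 2))⁻¹ * stdPdf ((t - r * x) / Real.sqrt (1 - r ^ 2)) :=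
        MeasureTheory.integral_const_mul _ _
    _ = stdPdf x * stdCdf ((k - r * x) / Real.sqrt (1 - r ^ 2)) := by
        rw [integral_stdPdf_comp _ _ _ hσ]

lemma hasDerivAt_inner (s y r : ℝ) (hr : r ∈ Set.Ioo (-1 : ℝ) 1) :
    HasDerivAt (fun r : ℝ => (y - r * s) / Real.sqrt (1 - r ^ 2))
      ((r * y - s) / Real.sqrt (1 - r ^ 2) ^ 3) r := by
  have h1 : (0:ℝ) < 1 - r ^ 2 := by nlinarith [hr.1, hr.2]
  have hσ : (0:ℝ) < Real.sqrt (1 - r ^ 2) := Real.sqrt_pos.2 h1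
  have hσ2 : Real.sqrt (1 - r ^ 2) ^ 2 = 1 - r ^ 2 := Real.sq_sqrt h1.le
  have hpoly : HasDerivAt (fun r : ℝ => 1 - r ^ 2) (-(2 * r ^ 1)) r :=
    (hasDerivAt_pow 2 r).const_sub 1
  have hsqrt : HasDerivAt (fun r : ℝ => Real.sqrt (1 - r ^ 2))
      (1 / (2 * Real.sqrt (1 - r ^ 2)) * -(2 * r ^ 1)) r :=
    (Real.hasDerivAt_sqrt h1.ne').comp r hpoly
  have hnum : HasDerivAt (fun r : ℝ => y - r * s) (-(1 * s)) r :=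
    ((hasDerivAt_id r).mul_const s).const_sub y
  have hdiv := hnum.div hsqrt hσ.ne'
  refine hdiv.congr_deriv ?_
  set σ := Real.sqrt (1 - r ^ 2) with hσdef
  rw [div_eq_div_iff (by positivity) (by positivity)]
  field_simp
  linear_combination (-s) * hσ2

lemma hasDerivAt_binPdf_fst (y r s : ℝ) (hr : r ∈ Set.Ioo (-1 : ℝ) 1) :
    HasDerivAt (fun s : ℝ => binPdf s y r)
      (binPdf s y r * ((r * y - s) / (1 - r ^ 2))) s := by
  have h1 : (0:ℝ) < 1 - r ^ 2 := by nlinarith [hr.1, hr.2]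
  have hq : HasDerivAt (fun s : ℝ => -(s ^ 2 - 2 * r * s * y + y ^ 2) / (2 * (1 - r ^ 2)))
      ((r * y - s) / (1 - r ^ 2)) s := by
    have h2 : HasDerivAt (fun s : ℝ => s ^ 2 - 2 * r * s * y + y ^ 2)
        (2 * s ^ 1 - 2 * r * 1 * y) s :=
      ((hasDerivAt_pow 2 s).sub (((hasDerivAt_id s).const_mul (2 * r)).mul_const y)).add_const
        (y ^ 2)
    have h3 := (h2.neg).div_const (2 * (1 - r ^ 2))
    refine h3.congr_deriv ?_
    field_simp
    ring
  have h4 := hq.exp.const_mul (1 / (2 * Real.pi * Real.sqrt (1 - r ^ 2)))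
  unfold binPdf
  refine h4.congr_deriv ?_
  ring

lemma tendsto_binPdf_atBot (y r : ℝ) (hr : r ∈ Set.Ioo (-1 : ℝ) 1) :
    Tendsto (fun s => binPdf s y r) atBot (nhds 0) := by
  have h1 : (0:ℝ) < 1 - r ^ 2 := by nlinarith [hr.1, hr.2]
  have hg : Tendsto (fun s : ℝ => -(s - r * y) - 1) atBot atTop := by
    apply tendsto_atTop_add_const_right
    apply tendsto_neg_atBot_atTop.comp
    simpa [sub_eq_add_neg] using
      tendsto_atBot_add_const_right atBot (-(r * y)) (tendsto_id (α := ℝ))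
  have hf : Tendsto (fun s : ℝ => s ^ 2 - 2 * r * s * y + y ^ 2) atBot atTop := by
    apply tendsto_atTop_mono (fun s : ℝ => ?_) hg
    nlinarith [sq_nonneg (s - r * y + 1), sq_nonneg (s - r * y),
      mul_nonneg h1.le (sq_nonneg y)]
  have hq : Tendsto (fun s : ℝ => -(s ^ 2 - 2 * r * s * y + y ^ 2) / (2 * (1 - r ^ 2)))
      atBot atBot := by
    have h2 := tendsto_neg_atTop_atBot.comp (hf.atTop_div_const (by positivity :
      (0:ℝ) < 2 * (1 - r ^ 2)))
    refine h2.congr fun s => ?_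
    simp only [Function.comp_apply]
    ring
  have h3 := (Real.tendsto_exp_atBot.comp hq).const_mul
    (1 / (2 * Real.pi * Real.sqrt (1 - r ^ 2)))
  rw [mul_zero] at h3
  unfold binPdf
  simpa only [Function.comp_def] using h3

lemma abs_mul_stdPdf_le (s : ℝ) : |s| * stdPdf s ≤ Real.exp (-(1/4) * s ^ 2) := by
  have h1 : stdPdf s ≤ Real.exp (-s ^ 2 / 2) := by
    unfold stdPdf
    have h3 : (1:ℝ) / Real.sqrt (2 * Real.pi) ≤ 1 := by
      rw [div_le_one (by positivity)]
      rw [show (1:ℝ) = Real.sqrt 1 by simp]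
      exact Real.sqrt_le_sqrt (by nlinarith [Real.pi_gt_three])
    nlinarith [Real.exp_pos (-s ^ 2 / 2)]
  have h2 : |s| ≤ Real.exp (s ^ 2 / 4) := by
    have := Real.add_one_le_exp (s ^ 2 / 4)
    nlinarith [sq_nonneg (|s| - 2), sq_abs s]
  calc |s| * stdPdf s ≤ Real.exp (s ^ 2 / 4) * Real.exp (-s ^ 2 / 2) :=
        mul_le_mul h2 h1 (stdPdf_nonneg s) (Real.exp_pos _).le
    _ = Real.exp (-(1/4) * s ^ 2) := by rw [← Real.exp_add]; congr 1; ring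

lemma integral_D (x y r : ℝ) (hr : r ∈ Set.Ioo (-1 : ℝ) 1)
    (hint : IntegrableOn (fun s => binPdf s y r * ((r * y - s) / (1 - r ^ 2))) (Set.Iio x)) :
    ∫ s in Set.Iio x, binPdf s y r * ((r * y - s) / (1 - r ^ 2)) = binPdf x y r := by
  set D : ℝ → ℝ := fun s => binPdf s y r * ((r * y - s) / (1 - r ^ 2)) with hD
  have m : MeasurableEmbedding fun x : ℝ => -x := (Homeomorph.neg ℝ).measurableEmbedding
  have hswap : ∫ u in Set.Ioi (-x), D (-u) = ∫ s in Set.Iio x, D s := by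
    rw [integral_comp_neg_Ioi, neg_neg, integral_Iic_eq_integral_Iio]
  have hderiv : ∀ u ∈ Set.Ici (-x), HasDerivAt (fun u => -(binPdf (-u) y r)) (D (-u)) u := by
    intro u _
    have h := hasDerivAt_binPdf_fst y r (-u) hr
    have h2 := (h.comp u (hasDerivAt_neg u)).neg
    refine h2.congr_deriv ?_
    simp [hD]
  have hint2 : IntegrableOn (fun u => D (-u)) (Set.Ioi (-x)) := by
    have h0 : IntegrableOn ((fun u => D (-u)) ∘ fun x : ℝ => -x)
        ((fun x : ℝ => -x) ⁻¹' Set.Ioi (-x)) volume := by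
      simpa [Function.comp_def, neg_preimage, neg_Ioi] using hint
    have h2 := (m.integrableOn_map_iff).2 h0
    rwa [Measure.map_neg_eq_self] at h2
  have htend : Tendsto (fun u : ℝ => -(binPdf (-u) y r)) atTop (nhds 0) := by
    have := ((tendsto_binPdf_atBot y r hr).comp tendsto_neg_atTop_atBot).neg
    simpa using this
  have := integral_Ioi_of_hasDerivAt_of_tendsto' hderiv hint2 htend
  rw [hswap] at this
  rw [this]
  simp

theorem plackett_identity (x y ρ : ℝ) (hρ : ρ ∈ Set.Ioo (-1 : ℝ) 1) :
    HasDerivAt (fun r : ℝ => binCdf x y r) (binPdf x y ρ) ρ := by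
  obtain ⟨hρ1, hρ2⟩ := hρ
  have habs : |ρ| < 1 := abs_lt.2 ⟨hρ1, hρ2⟩
  set F : ℝ → ℝ → ℝ := fun r s =>
    stdPdf s * stdCdf ((y - r * s) / Real.sqrt (1 - r ^ 2)) with hF
  set F' : ℝ → ℝ → ℝ := fun r s =>
    stdPdf s * (stdPdf ((y - r * s) / Real.sqrt (1 - r ^ 2)) *
      ((r * y - s) / Real.sqrt (1 - r ^ 2) ^ 3)) with hF'
  set ε : ℝ := (1 - |ρ|) / 2 with hε
  have hεpos : 0 < ε := by simp only [hε]; linarith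
  set a : ℝ := (1 + |ρ|) / 2 with ha
  have ha1 : a < 1 := by simp only [ha]; linarith
  have ha0 : 0 ≤ a := by positivity
  have hball : ∀ r ∈ Metric.ball ρ ε, |r| ≤ a := by
    intro r hr
    rw [Metric.mem_ball, Real.dist_eq] at hr
    calc |r| = |ρ + (r - ρ)| := by ring_nf
      _ ≤ |ρ| + |r - ρ| := abs_add_le _ _
      _ ≤ |ρ| + ε := by linarith [hr.le]
      _ = a := by simp only [hε, ha]; ring
  have hballIoo : ∀ r ∈ Metric.ball ρ ε, r ∈ Set.Ioo (-1 : ℝ) 1 := by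
    intro r hr
    have := (abs_lt.1 ((hball r hr).trans_lt ha1))
    exact ⟨this.1, this.2⟩
  set δ : ℝ := 1 - a ^ 2 with hδdef
  have hδ : 0 < δ := by simp only [hδdef]; nlinarith
  have hσδ : ∀ r ∈ Metric.ball ρ ε, Real.sqrt δ ≤ Real.sqrt (1 - r ^ 2) := by
    intro r hr
    apply Real.sqrt_le_sqrt
    have h1 := hball r hr
    simp only [hδdef]
    nlinarith [sq_abs r, abs_nonneg r]
  set c : ℝ := Real.sqrt δ ^ 3 with hc
  have hcpos : 0 < c := by positivity
  set bound : ℝ → ℝ := fun s =>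
    c⁻¹ * (|y| * stdPdf s + Real.exp (-(1/4) * s ^ 2)) with hbound
  have hI := hasDerivAt_integral_of_dominated_loc_of_deriv_le
    (μ := volume.restrict (Set.Iio x)) (F := F) (F' := F') (x₀ := ρ)
    (bound := bound) (Metric.ball_mem_nhds ρ hεpos) ?_ ?_ ?_ ?_ ?_ ?_
  · obtain ⟨hFint', hkey⟩ := hI
    -- rewrite the integrand of the derivative
    have hσ2 : Real.sqrt (1 - ρ ^ 2) ^ 2 = 1 - ρ ^ 2 :=
      Real.sq_sqrt (by nlinarith : (0:ℝ) ≤ 1 - ρ ^ 2)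
    have hσpos : 0 < Real.sqrt (1 - ρ ^ 2) := Real.sqrt_pos.2 (by nlinarith)
    have hDeq : ∀ s, F' ρ s = binPdf s y ρ * ((ρ * y - s) / (1 - ρ ^ 2)) := by
      intro s
      rw [binPdf_eq s y ρ ⟨hρ1, hρ2⟩, hF']
      simp only
      rw [← hσ2]
      rw [Real.sqrt_sq hσpos.le]
      field_simp
    have hint : IntegrableOn (fun s => binPdf s y ρ * ((ρ * y - s) / (1 - ρ ^ 2)))
        (Set.Iio x) := by
      apply hFint'.congr
      exact Eventually.of_forall fun s => (hDeq s)
    have heq : (∫ s in Set.Iio x, F' ρ s) = binPdf x y ρ := by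
      rw [setIntegral_congr_fun measurableSet_Iio fun s _ => hDeq s]
      exact integral_D x y ρ ⟨hρ1, hρ2⟩ hint
    rw [heq] at hkey
    apply hkey.congr_of_eventuallyEq
    filter_upwards [Ioo_mem_nhds hρ1 hρ2] with r hr
    unfold binCdf
    exact setIntegral_congr_fun measurableSet_Iio fun s _ => inner_integral s y r hr
  · -- measurability of F r
    refine Eventually.of_forall fun r => ?_
    apply Continuous.aestronglyMeasurable
    exact continuous_stdPdf.mul (continuous_stdCdf.comp
      ((continuous_const.sub (continuous_const.mul continuous_id)).div_const _))
  · -- integrability of F ρ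
    refine Integrable.mono' ((integrable_stdPdf.const_mul (∫ t, stdPdf t)).restrict)
      ?_ ?_
    · apply Continuous.aestronglyMeasurable
      exact continuous_stdPdf.mul (continuous_stdCdf.comp
        ((continuous_const.sub (continuous_const.mul continuous_id)).div_const _))
    · refine Eventually.of_forall fun s => ?_
      rw [hF]
      simp only [Real.norm_eq_abs, abs_mul, abs_of_nonneg (stdPdf_nonneg s),
        abs_of_nonneg (stdCdf_nonneg _)]
      rw [mul_comm (∫ t, stdPdf t) (stdPdf s)]
      exact mul_le_mul_of_nonneg_left (stdCdf_le _) (stdPdf_nonneg s)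
  · -- measurability of F' ρ
    apply Continuous.aestronglyMeasurable
    apply continuous_stdPdf.mul
    apply Continuous.mul
    · exact continuous_stdPdf.comp
        ((continuous_const.sub (continuous_const.mul continuous_id)).div_const _)
    · exact (continuous_const.sub continuous_id).div_const _
  · -- bound
    refine Eventually.of_forall fun s => fun r hr => ?_
    have hσ := hσδ r hr
    have hσpos : 0 < Real.sqrt (1 - r ^ 2) :=
      lt_of_lt_of_le (Real.sqrt_pos.2 hδ) hσ
    have hc3 : c ≤ Real.sqrt (1 - r ^ 2) ^ 3 := by
      rw [hc]
      exact pow_le_pow_left₀ (Real.sqrt_nonneg _) hσ 3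
    have hry : |r * y - s| ≤ |y| + |s| := by
      have h1 : |r * y - s| ≤ |r * y| + |s| := abs_sub _ _
      have h2 : |r * y| = |r| * |y| := abs_mul _ _
      have h3 : |r| ≤ 1 := (hball r hr).trans ha1.le
      nlinarith [abs_nonneg y, abs_nonneg s]
    have hk1 : stdPdf ((y - r * s) / Real.sqrt (1 - r ^ 2)) ≤ 1 := stdPdf_le_one _
    have hk0 : 0 ≤ stdPdf ((y - r * s) / Real.sqrt (1 - r ^ 2)) := stdPdf_nonneg _
    rw [hF']
    simp only [Real.norm_eq_abs, abs_mul, abs_of_nonneg (stdPdf_nonneg s),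
      abs_of_nonneg hk0, abs_div, abs_of_nonneg (pow_nonneg hσpos.le 3)]
    calc stdPdf s * (stdPdf ((y - r * s) / Real.sqrt (1 - r ^ 2)) *
          (|r * y - s| / Real.sqrt (1 - r ^ 2) ^ 3))
        ≤ stdPdf s * (1 * ((|y| + |s|) / c)) := by
          apply mul_le_mul_of_nonneg_left _ (stdPdf_nonneg s)
          apply mul_le_mul hk1 _ (by positivity) zero_le_one
          exact div_le_div₀ (by positivity) hry (by positivity) hc3
      _ = c⁻¹ * (|y| * stdPdf s + |s| * stdPdf s) := by
          field_simp
      _ ≤ bound s := by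
          rw [hbound]
          have := abs_mul_stdPdf_le s
          have h0 : 0 ≤ c⁻¹ := by positivity
          apply mul_le_mul_of_nonneg_left _ h0
          linarith
  · -- integrability of bound
    exact (((integrable_stdPdf.const_mul _).add
      (integrable_exp_neg_mul_sq (by norm_num : (0:ℝ) < 1/4))).const_mul _).restrict
  · -- differentiability
    refine Eventually.of_forall fun s => fun r hr => ?_
    exact ((hasDerivAt_stdCdf _).comp r (hasDerivAt_inner s y r (hballIoo r hr))).const_mul
      (stdPdf s)
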